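/- Let G be a locally compact group with left Haar measure λ, acting measure-preservingly on a probability space (X,μ). Suppose W ⊆ X is a measurable set with μ(W) > 0 and there is a compact set K ⊆ G such that for all g ∈ G, g·W ∩ W ≠ ∅ (up to null sets, i.e. μ(g·W ∩ W) > 0) implies g ∈ KK⁻¹. Then G is compact. -/

import Mathlib

open Set Pointwise MeasureTheory
open scoped ENNReal

/-- If a lc group `G` with Haar measure acts measure-preservingly on a
probability space `(X, μ)` and there is `W` with `μ(W) > 0` and a compact `K ⊆ G` such that
`μ(g • W ∩ W) > 0` implies `g ∈ KK⁻¹`, then `G` is compact. -/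
theorem stmt5 {G X : Type*} [Group G] [TopologicalSpace G] [IsTopologicalGroup G]
    [LocallyCompactSpace G] [SecondCountableTopology G]
    [MeasurableSpace G] [BorelSpace G] (lam : Measure G) [lam.IsHaarMeasure]
    [MeasurableSpace X] (μ : Measure X) [IsProbabilityMeasure μ] [MulAction G X]
    (hpmp : ∀ g : G, MeasurePreserving (fun x => g • x) μ μ)
    (W : Set X) (hW : MeasurableSet W) (hWpos : 0 < μ W)
    (K : Set G) (hK : IsCompact K)
    (hret : ∀ g : G, 0 < μ (g • W ∩ W) → g ∈ K * K⁻¹) :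
    CompactSpace G := by
  classical
  have hsmul_eq : ∀ g : G, g • W = (fun x => g⁻¹ • x) ⁻¹' W := by
    intro g; ext x
    simp [Set.mem_smul_set_iff_inv_smul_mem]
  have hmeas : ∀ g : G, MeasurableSet (g • W) := by
    intro g; rw [hsmul_eq]; exact (hpmp g⁻¹).measurable hW
  have hμ : ∀ g : G, μ (g • W) = μ W := by
    intro g; rw [hsmul_eq]
    exact (hpmp g⁻¹).measure_preimage hW.nullMeasurableSet
  -- key translation identity
  have hkey : ∀ g h : G, μ ((h⁻¹ * g) • W ∩ W) = μ (g • W ∩ h • W) := by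
    intro g h
    have hset : (h⁻¹ * g) • W ∩ W = (fun x => h • x) ⁻¹' (g • W ∩ h • W) := by
      ext x
      simp only [Set.mem_inter_iff, Set.mem_preimage,
        Set.mem_smul_set_iff_inv_smul_mem, mul_inv_rev, inv_inv, mul_smul,
        inv_smul_smul]
    rw [hset]
    exact (hpmp h).measure_preimage
      (((hmeas g).inter (hmeas h)).nullMeasurableSet)
  set P : Finset G → Prop :=
    fun F => ∀ g ∈ F, ∀ h ∈ F, g ≠ h → μ (g • W ∩ h • W) = 0 with hPdef
  -- cardinality bound
  have hbound : ∀ F : Finset G, P F → F.card ≤ Nat.ceil ((μ W)⁻¹).toReal := by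
    intro F hF
    have h1 : (F.card : ℝ≥0∞) * μ W ≤ 1 := by
      calc (F.card : ℝ≥0∞) * μ W = ∑ h ∈ F, μ (h • W) := by
            rw [Finset.sum_congr rfl (fun h _ => hμ h), Finset.sum_const,
              nsmul_eq_mul]
        _ = μ (⋃ h ∈ F, h • W) := by
            refine (measure_biUnion_finset₀ ?_
              (fun h _ => (hmeas h).nullMeasurableSet)).symm
            intro a ha b hb hab
            exact hF a ha b hb hab
        _ ≤ μ Set.univ := measure_mono (Set.subset_univ _)
        _ = 1 := measure_univ
    have h2 : (F.card : ℝ≥0∞) ≤ (μ W)⁻¹ := ENNReal.le_inv_iff_mul_le.mpr h1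
    have h3 : (μ W)⁻¹ ≠ ⊤ := ENNReal.inv_ne_top.mpr hWpos.ne'
    have h4 : (F.card : ℝ) ≤ ((μ W)⁻¹).toReal := by
      have := ENNReal.toReal_mono h3 h2
      simpa using this
    have h5 : (F.card : ℝ) ≤ (Nat.ceil ((μ W)⁻¹).toReal : ℝ) :=
      h4.trans (Nat.le_ceil _)
    exact_mod_cast h5
  -- maximal family
  set S : Set ℕ := {n | ∃ F : Finset G, P F ∧ F.card = n} with hSdef
  have hS0 : (0 : ℕ) ∈ S := ⟨∅, by simp [hPdef], by simp⟩
  have hSbdd : BddAbove S := by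
    refine ⟨Nat.ceil ((μ W)⁻¹).toReal, ?_⟩
    rintro n ⟨F, hF, rfl⟩
    exact hbound F hF
  set N := sSup S with hN
  obtain ⟨F, hF, hFcard⟩ : N ∈ S := Nat.sSup_mem ⟨0, hS0⟩ hSbdd
  -- maximality: every g meets some translate positively
  have hmax : ∀ g : G, ∃ h ∈ F, 0 < μ (g • W ∩ h • W) := by
    intro g
    by_contra hcon
    push_neg at hcon
    have hzero : ∀ h ∈ F, μ (g • W ∩ h • W) = 0 := by
      intro h hh
      exact le_antisymm (hcon h hh) zero_le
    have hgF : g ∉ F := by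
      intro hgF
      have := hzero g hgF
      rw [Set.inter_self, hμ g] at this
      exact hWpos.ne' this
    have hP' : P (insert g F) := by
      intro a ha b hb hab
      rcases Finset.mem_insert.mp ha with rfl | haF
      · rcases Finset.mem_insert.mp hb with rfl | hbF
        · exact absurd rfl hab
        · exact hzero b hbF
      · rcases Finset.mem_insert.mp hb with rfl | hbF
        · rw [Set.inter_comm]; exact hzero a haF
        · exact hF a haF b hbF hab
    have hcard : (insert g F).card = N + 1 := by
      rw [Finset.card_insert_of_notMem hgF, hFcard]
    have : N + 1 ∈ S := ⟨insert g F, hP', hcard⟩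
    have := le_csSup hSbdd this
    omega
  -- G is a finite union of translates of K * K⁻¹
  have hcover : (Set.univ : Set G) = ⋃ h ∈ F, (fun x => h * x) '' (K * K⁻¹) := by
    apply Set.eq_of_subset_of_subset _ (Set.subset_univ _)
    intro g _
    obtain ⟨h, hh, hpos⟩ := hmax g
    have : 0 < μ ((h⁻¹ * g) • W ∩ W) := by rw [hkey]; exact hpos
    have hmem : h⁻¹ * g ∈ K * K⁻¹ := hret _ this
    refine Set.mem_biUnion hh ⟨h⁻¹ * g, hmem, ?_⟩
    simp
  have hcomp : IsCompact (Set.univ : Set G) := by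
    rw [hcover]
    exact F.isCompact_biUnion (fun h _ =>
      ((hK.mul (hK.inv)).image (continuous_mul_left h)))
  exact ⟨hcomp⟩
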